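/- Exact calibration case: under the assumptions of the asymptotic mean calibration theorem, if additionally ψ' is constant on (0,1) (exactly mean-calibrated), then the sharper bound |σ²[𝒢_σ(f*) - 𝒢_σ(f)] - c₀‖f - f*‖²_{2,ρ}| ≤ c'_ε·σ^{-ε} holds with exponent ε (rather than min(ε,2)), where c'_ε = 6M(L₃+c₀)E|2Y|^{1+ε}. -/

import Mathlib

open MeasureTheory

/-- Asymptotic mean calibration: for `f* = E(Y|X)` bounded by `M`,
`E|Y|^{1+ε} < ∞`, `σ ≥ max(2M,1)`, and a strongly mean-calibrated gain
`p_σ(t) = ψ(t²/σ²)` with `c₀ = -ψ'(0)`, every measurable `f` with `‖f‖_∞ ≤ M`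
satisfies, when `ψ'` is moreover constant on `(0,1)` (exact mean calibration),
the sharper bound `|σ²[𝒢_σ(f*) - 𝒢_σ(f)] - c₀‖f - f*‖²_{2,ρ}| ≤ c'_ε σ^{-ε}`
with `c'_ε = 6M(L₃+c₀)E|2Y|^{1+ε}`. -/
theorem stmt14 {Ω 𝒳 : Type*} [MeasurableSpace Ω] [MeasurableSpace 𝒳]
    (μ : Measure Ω) [IsProbabilityMeasure μ]
    (X : Ω → 𝒳) (Y : Ω → ℝ) (hX : Measurable X) (hY : Measurable Y)
    (fstar : 𝒳 → ℝ) (hfstar : Measurable fstar)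
    (hcond : (fun ω => fstar (X ω)) =ᵐ[μ] μ[Y | MeasurableSpace.comap X inferInstance])
    (ψ ψ' : ℝ → ℝ) (hψmeas : Measurable ψ)
    (ε M L₁ L₂ σ : ℝ) (hε : 0 < ε) (hM : 0 < M) (hσ : max (2 * M) 1 ≤ σ)
    (hfstarM : ∀ x, |fstar x| ≤ M)
    (hψ_nonneg : ∀ t, 0 ≤ t → 0 ≤ ψ t)
    (hψ_anti : ∀ u v : ℝ, 0 ≤ u → u ≤ v → ψ v ≤ ψ u)
    (hL₁ : ∀ s t : ℝ, |ψ (s ^ 2) - ψ (t ^ 2)| ≤ L₁ * |s - t|)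
    (hderiv : ∀ t ∈ Set.Ico (0 : ℝ) 1,
      HasDerivWithinAt ψ (ψ' t) (Set.Ico (0 : ℝ) 1) t)
    (hψ'0 : ψ' 0 < 0)
    (hL₂ : ∀ s ∈ Set.Ico (0 : ℝ) 1, ∀ t ∈ Set.Ico (0 : ℝ) 1,
      |ψ' s - ψ' t| ≤ L₂ * |s - t|)
    (hmom : Integrable (fun ω => |Y ω| ^ (1 + ε)) μ)
    (hconst : ∀ s ∈ Set.Ioo (0 : ℝ) 1, ∀ t ∈ Set.Ioo (0 : ℝ) 1, ψ' s = ψ' t) :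
    ∀ f : 𝒳 → ℝ, Measurable f → (∀ x, |f x| ≤ M) →
      |σ ^ 2 * ((∫ ω, ψ ((Y ω - fstar (X ω)) ^ 2 / σ ^ 2) ∂μ) -
              ∫ ω, ψ ((Y ω - f (X ω)) ^ 2 / σ ^ 2) ∂μ) -
          (-ψ' 0) * ∫ ω, (f (X ω) - fstar (X ω)) ^ 2 ∂μ| ≤
        6 * M * (max (L₂ + (-ψ' 0)) (L₁ / 2) + (-ψ' 0)) *
            (∫ ω, |2 * Y ω| ^ (1 + ε) ∂μ) *
          σ ^ (-ε) := by
  intro f hf hfM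
  set c : ℝ := -ψ' 0 with hcdef
  have hc0 : 0 < c := by simp only [hcdef]; linarith
  have hσ1 : (1:ℝ) ≤ σ := le_trans (le_max_right _ _) hσ
  have hσpos : 0 < σ := lt_of_lt_of_le one_pos hσ1
  have h2M : 2 * M ≤ σ := le_trans (le_max_left _ _) hσ
  have hL₁0 : 0 ≤ L₁ := by
    have h := hL₁ 1 0
    have h0 := abs_nonneg (ψ (1 ^ 2) - ψ (0 ^ 2))
    simp only [sub_zero, abs_one, mul_one] at h
    linarith
  have hL₂0 : 0 ≤ L₂ := by
    have h := hL₂ (1/2) ⟨by norm_num, by norm_num⟩ 0 ⟨le_refl 0, by norm_num⟩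
    have h0 := abs_nonneg (ψ' (1/2) - ψ' 0)
    rw [sub_zero] at h
    have : |(1:ℝ)/2| = 1/2 := by norm_num
    rw [this] at h
    linarith
  -- ψ' is identically ψ' 0 on [0,1)
  have hψ'eq : ∀ t ∈ Set.Ico (0:ℝ) 1, ψ' t = ψ' 0 := by
    intro t ht
    rcases eq_or_lt_of_le ht.1 with h0 | h0
    · rw [← h0]
    have key : ∀ δ, δ ∈ Set.Ioo (0:ℝ) 1 → |ψ' t - ψ' 0| ≤ L₂ * δ := by
      intro δ hδ
      have h1 : ψ' t = ψ' δ := hconst t ⟨h0, ht.2⟩ δ hδ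
      have h2 := hL₂ δ ⟨hδ.1.le, hδ.2⟩ 0 ⟨le_refl 0, one_pos⟩
      rw [h1]
      rw [sub_zero, abs_of_pos hδ.1] at h2
      exact h2
    by_contra hne
    have ha : 0 < |ψ' t - ψ' 0| := abs_pos.mpr (sub_ne_zero.mpr hne)
    set a := |ψ' t - ψ' 0| with hadef
    have hδpos : 0 < a / (2 * (L₂ + 1)) := by positivity
    have hδmem : min (1/2) (a / (2 * (L₂ + 1))) ∈ Set.Ioo (0:ℝ) 1 :=
      ⟨lt_min (by norm_num) hδpos, lt_of_le_of_lt (min_le_left _ _) (by norm_num)⟩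
    have h1 := key _ hδmem
    have h2 : L₂ * min (1/2) (a / (2 * (L₂ + 1))) ≤ L₂ * (a / (2 * (L₂ + 1))) :=
      mul_le_mul_of_nonneg_left (min_le_right _ _) hL₂0
    have h3 : L₂ * (a / (2 * (L₂ + 1))) < a := by
      rw [mul_div_assoc', div_lt_iff₀ (by positivity)]
      nlinarith
    linarith
  -- ψ is affine on [0,1)
  have hψlin : ∀ u ∈ Set.Ico (0:ℝ) 1, ψ u = ψ 0 - c * u := by
    intro u hu
    have hg : ∀ x ∈ Set.Ico (0:ℝ) 1,
        HasDerivWithinAt (fun v => ψ v + c * v) ((fun _ => (0:ℝ)) x) (Set.Ico (0:ℝ) 1) x := by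
      intro x hx
      have h1 := hderiv x hx
      have h2 : HasDerivWithinAt (fun v : ℝ => c * v) c (Set.Ico (0:ℝ) 1) x := by
        simpa using (hasDerivWithinAt_id x (Set.Ico (0:ℝ) 1)).const_mul c
      have h3 := h1.add h2
      rw [hψ'eq x hx] at h3
      have : ψ' 0 + c = 0 := by simp [hcdef]
      rwa [this] at h3
    have hb : ∀ x ∈ Set.Ico (0:ℝ) 1, ‖(fun _ => (0:ℝ)) x‖ ≤ 0 := by
      intro x _; simp
    have h := (convex_Ico (0:ℝ) 1).norm_image_sub_le_of_norm_hasDerivWithin_le hg hb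
      (⟨le_refl 0, one_pos⟩ : (0:ℝ) ∈ Set.Ico (0:ℝ) 1) hu
    simp only [zero_mul, mul_zero, add_zero, Real.norm_eq_abs] at h
    have h0 : |ψ u + c * u - (ψ 0 + c * 0)| ≤ 0 := by simpa using h
    have h1 : ψ u + c * u - (ψ 0 + c * 0) = 0 :=
      abs_eq_zero.mp (le_antisymm h0 (abs_nonneg _))
    linarith
  -- Y is integrable
  have hYint : Integrable Y μ := by
    refine (hmom.add (integrable_const 1)).mono' hY.aestronglyMeasurable ?_
    filter_upwards with ω
    rw [Real.norm_eq_abs]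
    show |Y ω| ≤ |Y ω| ^ (1 + ε) + 1
    rcases le_or_gt (|Y ω|) 1 with h | h
    · have : (0:ℝ) ≤ |Y ω| ^ (1 + ε) := Real.rpow_nonneg (abs_nonneg _) _
      linarith
    · have h1 : |Y ω| = |Y ω| ^ (1:ℝ) := (Real.rpow_one _).symm
      have h2 : |Y ω| ^ (1:ℝ) ≤ |Y ω| ^ (1 + ε) :=
        Real.rpow_le_rpow_of_exponent_le h.le (by linarith)
      calc |Y ω| = |Y ω| ^ (1:ℝ) := h1
        _ ≤ |Y ω| ^ (1 + ε) := h2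
        _ ≤ |Y ω| ^ (1 + ε) + 1 := by linarith
  -- abbreviations and integrability of the pieces
  set G : Ω → ℝ := fun ω => fstar (X ω) - f (X ω) with hGdef
  have hGbd : ∀ ω, |G ω| ≤ 2 * M := by
    intro ω
    calc |G ω| ≤ |fstar (X ω)| + |f (X ω)| := abs_sub _ _
      _ ≤ M + M := add_le_add (hfstarM _) (hfM _)
      _ = 2 * M := by ring
  have hGmeas : Measurable G := (hfstar.comp hX).sub (hf.comp hX)
  have hAarg : Measurable fun ω => (Y ω - fstar (X ω)) ^ 2 / σ ^ 2 :=
    ((hY.sub (hfstar.comp hX)).pow_const 2).div_const _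
  have hBarg : Measurable fun ω => (Y ω - f (X ω)) ^ 2 / σ ^ 2 :=
    ((hY.sub (hf.comp hX)).pow_const 2).div_const _
  have hψbd : ∀ u : ℝ, 0 ≤ u → ‖ψ u‖ ≤ ψ 0 := by
    intro u hu
    rw [Real.norm_eq_abs, abs_of_nonneg (hψ_nonneg u hu)]
    exact hψ_anti 0 u le_rfl hu
  have hAint : Integrable (fun ω => ψ ((Y ω - fstar (X ω)) ^ 2 / σ ^ 2)) μ := by
    refine (integrable_const (ψ 0)).mono' (hψmeas.comp hAarg).aestronglyMeasurable ?_
    filter_upwards with ω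
    exact hψbd _ (by positivity)
  have hBint : Integrable (fun ω => ψ ((Y ω - f (X ω)) ^ 2 / σ ^ 2)) μ := by
    refine (integrable_const (ψ 0)).mono' (hψmeas.comp hBarg).aestronglyMeasurable ?_
    filter_upwards with ω
    exact hψbd _ (by positivity)
  set D : Ω → ℝ := fun ω => (Y ω - f (X ω)) ^ 2 - (Y ω - fstar (X ω)) ^ 2 with hDdef
  have hInt1 : Integrable (fun ω => (2 * G ω) * Y ω) μ := by
    refine hYint.bdd_mul ((hGmeas.const_mul 2).aestronglyMeasurable) (c := 4 * M) (Filter.Eventually.of_forall fun ω => ?_)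
    rw [Real.norm_eq_abs, abs_mul, abs_two]
    have := hGbd ω
    linarith
  have hInt2 : Integrable (fun ω => G ω * (f (X ω) + fstar (X ω))) μ := by
    refine (integrable_const (2 * M * (2 * M))).mono'
      ((hGmeas.mul ((hf.comp hX).add (hfstar.comp hX))).aestronglyMeasurable) ?_
    filter_upwards with ω
    rw [Real.norm_eq_abs, abs_mul]
    have h1 := hGbd ω
    have h2 : |f (X ω) + fstar (X ω)| ≤ 2 * M := by
      calc |f (X ω) + fstar (X ω)| ≤ |f (X ω)| + |fstar (X ω)| := abs_add_le _ _
        _ ≤ M + M := add_le_add (hfM _) (hfstarM _)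
        _ = 2 * M := by ring
    exact mul_le_mul h1 h2 (abs_nonneg _) (by linarith)
  have hInt3 : Integrable (fun ω => (2 * G ω) * fstar (X ω)) μ := by
    refine (integrable_const (4 * M * M)).mono'
      (((hGmeas.const_mul 2).mul (hfstar.comp hX)).aestronglyMeasurable) ?_
    filter_upwards with ω
    rw [Real.norm_eq_abs, abs_mul, abs_mul, abs_two]
    have h1 := hGbd ω
    have h2 := hfstarM (X ω)
    nlinarith [abs_nonneg (G ω), abs_nonneg (fstar (X ω))]
  have hDint : Integrable D μ := by
    have : D = fun ω => (2 * G ω) * Y ω - G ω * (f (X ω) + fstar (X ω)) := by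
      funext ω; simp only [hDdef, hGdef]; ring
    rw [this]
    exact hInt1.sub hInt2
  -- conditional expectation step
  have hm : MeasurableSpace.comap X inferInstance ≤ _ := hX.comap_le
  have hGsm : StronglyMeasurable[MeasurableSpace.comap X inferInstance]
      (fun ω => 2 * G ω) := by
    have hXm : Measurable[MeasurableSpace.comap X inferInstance] X :=
      Measurable.of_comap_le le_rfl
    exact (((hfstar.sub hf).comp hXm).const_mul 2).stronglyMeasurable
  have hInt1' : Integrable ((fun ω => 2 * G ω) * Y) μ := hInt1
  have hmul : μ[(fun ω => (2 * G ω) * Y ω)|MeasurableSpace.comap X inferInstance]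
      =ᵐ[μ] (fun ω => (2 * G ω) * fstar (X ω)) := by
    have h2 : μ[(fun ω => 2 * G ω) * Y|MeasurableSpace.comap X inferInstance]
        =ᵐ[μ] (fun ω => 2 * G ω) * μ[Y|MeasurableSpace.comap X inferInstance] :=
      condExp_mul_of_stronglyMeasurable_left hGsm hInt1' hYint
    filter_upwards [h2, hcond] with ω hω hcω
    have he : (μ[(fun ω => (2 * G ω) * Y ω)|MeasurableSpace.comap X inferInstance]) ω
        = ((fun ω => 2 * G ω) * μ[Y|MeasurableSpace.comap X inferInstance]) ω := hω
    rw [he]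
    simp only [Pi.mul_apply]
    rw [← hcω]
  have h1 : ∫ ω, (μ[(fun ω => (2 * G ω) * Y ω)|MeasurableSpace.comap X inferInstance]) ω ∂μ
      = ∫ ω, (2 * G ω) * Y ω ∂μ := integral_condExp hm
  have hkey : ∫ ω, (2 * G ω) * Y ω ∂μ = ∫ ω, (2 * G ω) * fstar (X ω) ∂μ := by
    rw [← h1]
    exact integral_congr_ae hmul
  have hstep : ∫ ω, D ω ∂μ = ∫ ω, (f (X ω) - fstar (X ω)) ^ 2 ∂μ := by
    have e1 : ∫ ω, D ω ∂μ =
        (∫ ω, (2 * G ω) * Y ω ∂μ) - ∫ ω, G ω * (f (X ω) + fstar (X ω)) ∂μ := by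
      rw [← integral_sub hInt1 hInt2]
      refine integral_congr_ae (Filter.Eventually.of_forall fun ω => ?_)
      simp only [hDdef, hGdef]; ring
    rw [e1, hkey, ← integral_sub hInt3 hInt2]
    refine integral_congr_ae (Filter.Eventually.of_forall fun ω => ?_)
    simp only [hGdef]; ring
  -- the error as a single integral
  set h : Ω → ℝ := fun ω =>
    σ ^ 2 * ψ ((Y ω - fstar (X ω)) ^ 2 / σ ^ 2) - σ ^ 2 * ψ ((Y ω - f (X ω)) ^ 2 / σ ^ 2)
      - c * D ω with hhdef
  have i1 : Integrable (fun ω =>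
      σ ^ 2 * ψ ((Y ω - fstar (X ω)) ^ 2 / σ ^ 2)
        - σ ^ 2 * ψ ((Y ω - f (X ω)) ^ 2 / σ ^ 2)) μ :=
    (hAint.const_mul _).sub (hBint.const_mul _)
  have hhint : Integrable h μ := i1.sub (hDint.const_mul _)
  have hmain : σ ^ 2 * ((∫ ω, ψ ((Y ω - fstar (X ω)) ^ 2 / σ ^ 2) ∂μ) -
        ∫ ω, ψ ((Y ω - f (X ω)) ^ 2 / σ ^ 2) ∂μ) -
      c * ∫ ω, (f (X ω) - fstar (X ω)) ^ 2 ∂μ = ∫ ω, h ω ∂μ := by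
    have hsplit : ∫ ω, h ω ∂μ =
        (∫ ω, σ ^ 2 * ψ ((Y ω - fstar (X ω)) ^ 2 / σ ^ 2) ∂μ) -
        (∫ ω, σ ^ 2 * ψ ((Y ω - f (X ω)) ^ 2 / σ ^ 2) ∂μ) - ∫ ω, c * D ω ∂μ := by
      simp only [hhdef]
      rw [integral_sub i1 (hDint.const_mul c),
        integral_sub (hAint.const_mul (σ ^ 2)) (hBint.const_mul (σ ^ 2))]
    rw [← hstep, hsplit, integral_const_mul, integral_const_mul, integral_const_mul]
    ring
  -- pointwise bound
  have hK0 : (0:ℝ) ≤ 2 * M * (L₁ + 2 * c) := by nlinarith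
  have hpt : ∀ ω, |h ω| ≤ (2 * M * (L₁ + 2 * c)) * (|2 * Y ω| ^ (1 + ε) * σ ^ (-ε)) := by
    intro ω
    have habs2Y : |2 * Y ω| = 2 * |Y ω| := by rw [abs_mul, abs_two]
    have htsbd : |(Y ω - fstar (X ω)) - (Y ω - f (X ω))| ≤ 2 * M := by
      have e : (Y ω - fstar (X ω)) - (Y ω - f (X ω)) = f (X ω) - fstar (X ω) := by ring
      rw [e]
      calc |f (X ω) - fstar (X ω)| ≤ |f (X ω)| + |fstar (X ω)| := abs_sub _ _
        _ ≤ M + M := add_le_add (hfM _) (hfstarM _)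
        _ = 2 * M := by ring
    have hRS : (0:ℝ) ≤ |2 * Y ω| ^ (1 + ε) * σ ^ (-ε) :=
      mul_nonneg (Real.rpow_nonneg (abs_nonneg _) _) (Real.rpow_nonneg hσpos.le _)
    rcases lt_or_ge (|2 * Y ω|) σ with hcase | hcase
    · -- small case : h ω = 0
      have hY2 : |Y ω| < σ / 2 := by rw [habs2Y] at hcase; linarith
      have hM2 : M ≤ σ / 2 := by linarith
      have habst : |Y ω - fstar (X ω)| < σ := by
        calc |Y ω - fstar (X ω)| ≤ |Y ω| + |fstar (X ω)| := abs_sub _ _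
          _ < σ / 2 + σ / 2 := add_lt_add_of_lt_of_le hY2 (le_trans (hfstarM _) hM2)
          _ = σ := by ring
      have habss : |Y ω - f (X ω)| < σ := by
        calc |Y ω - f (X ω)| ≤ |Y ω| + |f (X ω)| := abs_sub _ _
          _ < σ / 2 + σ / 2 := add_lt_add_of_lt_of_le hY2 (le_trans (hfM _) hM2)
          _ = σ := by ring
      have hmemT : (Y ω - fstar (X ω)) ^ 2 / σ ^ 2 ∈ Set.Ico (0:ℝ) 1 := by
        refine ⟨by positivity, ?_⟩
        rw [div_lt_one (by positivity)]
        calc (Y ω - fstar (X ω)) ^ 2 = |Y ω - fstar (X ω)| ^ 2 := (sq_abs _).symm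
          _ < σ ^ 2 := pow_lt_pow_left₀ habst (abs_nonneg _) (by norm_num)
      have hmemS : (Y ω - f (X ω)) ^ 2 / σ ^ 2 ∈ Set.Ico (0:ℝ) 1 := by
        refine ⟨by positivity, ?_⟩
        rw [div_lt_one (by positivity)]
        calc (Y ω - f (X ω)) ^ 2 = |Y ω - f (X ω)| ^ 2 := (sq_abs _).symm
          _ < σ ^ 2 := pow_lt_pow_left₀ habss (abs_nonneg _) (by norm_num)
      have hzero : h ω = 0 := by
        simp only [hhdef, hDdef]
        rw [hψlin _ hmemT, hψlin _ hmemS]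
        field_simp
        ring
      rw [hzero, abs_zero]
      exact mul_nonneg hK0 hRS
    · -- large case
      have hσ2Y : σ ≤ 2 * |Y ω| := by rwa [habs2Y] at hcase
      have hABd : |ψ ((Y ω - fstar (X ω)) ^ 2 / σ ^ 2) - ψ ((Y ω - f (X ω)) ^ 2 / σ ^ 2)|
          ≤ L₁ * (2 * M) / σ := by
        have e1 : (Y ω - fstar (X ω)) ^ 2 / σ ^ 2 = ((Y ω - fstar (X ω)) / σ) ^ 2 := by
          rw [div_pow]
        have e2 : (Y ω - f (X ω)) ^ 2 / σ ^ 2 = ((Y ω - f (X ω)) / σ) ^ 2 := by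
          rw [div_pow]
        rw [e1, e2]
        have hthis := hL₁ ((Y ω - fstar (X ω)) / σ) ((Y ω - f (X ω)) / σ)
        have e3 : (Y ω - fstar (X ω)) / σ - (Y ω - f (X ω)) / σ
            = ((Y ω - fstar (X ω)) - (Y ω - f (X ω))) / σ := by ring
        rw [e3, abs_div, abs_of_pos hσpos] at hthis
        refine hthis.trans ?_
        rw [mul_div_assoc]
        gcongr
      have hsum : |(Y ω - fstar (X ω)) + (Y ω - f (X ω))| ≤ 2 * |2 * Y ω| := by
        have ha1 : |(Y ω - fstar (X ω)) + (Y ω - f (X ω))|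
            ≤ |Y ω - fstar (X ω)| + |Y ω - f (X ω)| := abs_add_le _ _
        have ha2 : |Y ω - fstar (X ω)| ≤ |Y ω| + M :=
          (abs_sub _ _).trans (add_le_add le_rfl (hfstarM _))
        have ha3 : |Y ω - f (X ω)| ≤ |Y ω| + M :=
          (abs_sub _ _).trans (add_le_add le_rfl (hfM _))
        rw [habs2Y]
        linarith
      have hDbd : |D ω| ≤ 2 * M * (2 * |2 * Y ω|) := by
        have e : D ω = -(((Y ω - fstar (X ω)) - (Y ω - f (X ω)))
            * ((Y ω - fstar (X ω)) + (Y ω - f (X ω)))) := by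
          simp only [hDdef]; ring
        rw [e, abs_neg, abs_mul]
        exact mul_le_mul htsbd hsum (abs_nonneg _) (by linarith)
      have e0 : h ω = σ ^ 2 * (ψ ((Y ω - fstar (X ω)) ^ 2 / σ ^ 2)
          - ψ ((Y ω - f (X ω)) ^ 2 / σ ^ 2)) - c * D ω := by
        simp only [hhdef]; ring
      have habs0 : |h ω| ≤ σ ^ 2 * |ψ ((Y ω - fstar (X ω)) ^ 2 / σ ^ 2)
          - ψ ((Y ω - f (X ω)) ^ 2 / σ ^ 2)| + c * |D ω| := by
        rw [e0]
        refine (abs_sub _ _).trans (le_of_eq ?_)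
        rw [abs_mul, abs_mul, abs_of_pos hc0, abs_of_pos (pow_pos hσpos 2)]
      have h2 : σ ^ 2 * (L₁ * (2 * M) / σ) = σ * (L₁ * (2 * M)) := by
        field_simp
      have h3 : σ ^ 2 * |ψ ((Y ω - fstar (X ω)) ^ 2 / σ ^ 2)
          - ψ ((Y ω - f (X ω)) ^ 2 / σ ^ 2)| ≤ σ * (L₁ * (2 * M)) := by
        rw [← h2]
        exact mul_le_mul_of_nonneg_left hABd (by positivity)
      have h4 : σ * (L₁ * (2 * M)) ≤ (2 * |Y ω|) * (L₁ * (2 * M)) :=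
        mul_le_mul_of_nonneg_right hσ2Y (by positivity)
      have h5 : c * |D ω| ≤ c * (2 * M * (2 * |2 * Y ω|)) :=
        mul_le_mul_of_nonneg_left hDbd hc0.le
      have hlin : |h ω| ≤ (2 * M * (L₁ + 2 * c)) * |2 * Y ω| := by
        rw [habs2Y] at h5 ⊢
        have h6 := habs0.trans (add_le_add (h3.trans h4) h5)
        exact h6.trans (le_of_eq (by ring))
      have h2Ypos : (0:ℝ) < |2 * Y ω| := lt_of_lt_of_le hσpos hcase
      have hpow : |2 * Y ω| ≤ |2 * Y ω| ^ (1 + ε) * σ ^ (-ε) := by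
        have e1 : |2 * Y ω| ^ (1 + ε) = |2 * Y ω| * |2 * Y ω| ^ ε := by
          rw [Real.rpow_add h2Ypos, Real.rpow_one]
        have e2 : σ ^ ε ≤ |2 * Y ω| ^ ε :=
          Real.rpow_le_rpow hσpos.le hcase hε.le
        have e3 : (1:ℝ) ≤ |2 * Y ω| ^ ε * σ ^ (-ε) := by
          rw [Real.rpow_neg hσpos.le, ← div_eq_mul_inv,
            le_div_iff₀ (Real.rpow_pos_of_pos hσpos ε)]
          simpa using e2
        calc |2 * Y ω| = |2 * Y ω| * 1 := (mul_one _).symm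
          _ ≤ |2 * Y ω| * (|2 * Y ω| ^ ε * σ ^ (-ε)) :=
              mul_le_mul_of_nonneg_left e3 (abs_nonneg _)
          _ = |2 * Y ω| ^ (1 + ε) * σ ^ (-ε) := by rw [e1]; ring
      exact hlin.trans (mul_le_mul_of_nonneg_left hpow hK0)
  -- integrability of the dominating function
  have h2Yint : Integrable (fun ω => |2 * Y ω| ^ (1 + ε)) μ := by
    refine (hmom.const_mul ((2:ℝ) ^ (1 + ε))).congr ?_
    filter_upwards with ω
    rw [abs_mul, abs_two, Real.mul_rpow (by norm_num) (abs_nonneg _)]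
  have hInonneg : 0 ≤ ∫ ω, |2 * Y ω| ^ (1 + ε) ∂μ :=
    integral_nonneg fun ω => Real.rpow_nonneg (abs_nonneg _) _
  -- final bound
  rw [hmain]
  have hb1 : |∫ ω, h ω ∂μ| ≤ ∫ ω, |h ω| ∂μ := by
    simpa [Real.norm_eq_abs] using norm_integral_le_integral_norm (μ := μ) h
  have hb2 : ∫ ω, |h ω| ∂μ
      ≤ ∫ ω, (2 * M * (L₁ + 2 * c)) * (|2 * Y ω| ^ (1 + ε) * σ ^ (-ε)) ∂μ := by
    refine integral_mono hhint.abs ((h2Yint.mul_const _).const_mul _) hpt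
  have hb3 : ∫ ω, (2 * M * (L₁ + 2 * c)) * (|2 * Y ω| ^ (1 + ε) * σ ^ (-ε)) ∂μ
      = (2 * M * (L₁ + 2 * c)) * ((∫ ω, |2 * Y ω| ^ (1 + ε) ∂μ) * σ ^ (-ε)) := by
    rw [integral_const_mul]
    congr 1
    rw [integral_mul_const]
  have hconstle : 2 * M * (L₁ + 2 * c) ≤ 6 * M * (max (L₂ + c) (L₁ / 2) + c) := by
    have hmax : L₁ / 2 ≤ max (L₂ + c) (L₁ / 2) := le_max_right _ _
    nlinarith
  have hσε : (0:ℝ) ≤ σ ^ (-ε) := Real.rpow_nonneg hσpos.le _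
  calc |∫ ω, h ω ∂μ|
      ≤ (2 * M * (L₁ + 2 * c)) * ((∫ ω, |2 * Y ω| ^ (1 + ε) ∂μ) * σ ^ (-ε)) := by
        rw [← hb3]
        exact hb1.trans hb2
    _ ≤ 6 * M * (max (L₂ + c) (L₁ / 2) + c) * (∫ ω, |2 * Y ω| ^ (1 + ε) ∂μ) * σ ^ (-ε) := by
        rw [mul_assoc (6 * M * (max (L₂ + c) (L₁ / 2) + c))]
        exact mul_le_mul_of_nonneg_right hconstle (mul_nonneg hInonneg hσε)
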